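/- Let P > 0, let q : ℝ → ℝ be continuous, let λ₀ ∈ ℝ, and let u₀ : ℝ → ℝ be C² with u₀''(x) + (q(x) + λ₀)u₀(x) = 0 for all x ∈ [0,P] and u₀(0) = u₀(P) = 0. Define ψ(x) := u₀(x)u₀'(x). Then ∫₀^P (|ψ'(x)|² − q(x)|ψ(x)|²) dx = ∫₀^P (q(x) + λ₀)(q(x) + (4/3)λ₀) |u₀(x)|⁴ dx. -/

import Mathlib

open intervalIntegral

/-- **Evaluation of the quadratic form at `ψ = u₀u₀'`.** For a Dirichlet solution `u₀` of
`u'' + (q + λ₀)u = 0` on `[0,P]` and `ψ = u₀u₀'`,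
`∫₀^P (|ψ'|² − q|ψ|²) dx = ∫₀^P (q + λ₀)(q + (4/3)λ₀)|u₀|⁴ dx`. -/
theorem quadratic_form_evaluation
    (P : ℝ) (hP : 0 < P) (q : ℝ → ℝ) (hq : Continuous q)
    (lam₀ : ℝ) (u₀ : ℝ → ℝ) (hu₀C2 : ContDiff ℝ 2 u₀)
    (hode : ∀ x ∈ Set.Icc 0 P, deriv (deriv u₀) x + (q x + lam₀) * u₀ x = 0)
    (hu₀0 : u₀ 0 = 0) (hu₀P : u₀ P = 0)
    (ψ : ℝ → ℝ) (hψ : ψ = fun x => u₀ x * deriv u₀ x) :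
    ∫ x in (0:ℝ)..P, ((deriv ψ x) ^ 2 - q x * (ψ x) ^ 2)
      = ∫ x in (0:ℝ)..P, (q x + lam₀) * (q x + (4 / 3) * lam₀) * (u₀ x) ^ 4 := by
  obtain ⟨hud, hc1⟩ := contDiff_succ_iff_deriv.mp
    (show ContDiff ℝ ((1:ℕ)+1) u₀ from by exact_mod_cast hu₀C2)
  have hud' : Differentiable ℝ (deriv u₀) := hc1.2.differentiable (by simp)
  have cu : Continuous u₀ := hud.continuous
  have cu' : Continuous (deriv u₀) := hud'.continuous
  have cu'' : Continuous (deriv (deriv u₀)) := hc1.2.continuous_deriv le_rfl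
  have hderivψ : ∀ x, deriv ψ x = (deriv u₀ x)^2 + u₀ x * deriv (deriv u₀) x := by
    intro x
    have h : HasDerivAt (fun y => u₀ y * deriv u₀ y)
        (deriv u₀ x * deriv u₀ x + u₀ x * deriv (deriv u₀) x) x :=
      ((hud x).hasDerivAt).mul ((hud' x).hasDerivAt)
    rw [hψ, h.deriv]; ring
  -- integration by parts identity A
  have hA : ∫ x in (0:ℝ)..P,
      (3*(u₀ x)^2*(deriv u₀ x)^2 + (u₀ x)^3 * deriv (deriv u₀) x) = 0 := by
    have h := integral_eq_sub_of_hasDerivAt (a := (0:ℝ)) (b := P)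
      (f := fun x => (u₀ x)^3 * deriv u₀ x)
      (f' := fun x => 3*(u₀ x)^2*(deriv u₀ x)^2 + (u₀ x)^3 * deriv (deriv u₀) x)
      (fun x _ => by
        have h1 : HasDerivAt (fun y => (u₀ y)^3) (3*(u₀ x)^2 * deriv u₀ x) x := by
          have := ((hud x).hasDerivAt).fun_pow 3
          simpa using this
        have h2 := h1.fun_mul ((hud' x).hasDerivAt)
        exact h2.congr_deriv (by ring))
      (Continuous.intervalIntegrable (by fun_prop) 0 P)
    rw [h]; simp [hu₀0, hu₀P]
  -- integration by parts identity B
  have hB : ∫ x in (0:ℝ)..P,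
      ((deriv u₀ x)^4 + 3*(u₀ x)*(deriv u₀ x)^2 * deriv (deriv u₀) x) = 0 := by
    have h := integral_eq_sub_of_hasDerivAt (a := (0:ℝ)) (b := P)
      (f := fun x => u₀ x * (deriv u₀ x)^3)
      (f' := fun x => (deriv u₀ x)^4 + 3*(u₀ x)*(deriv u₀ x)^2 * deriv (deriv u₀) x)
      (fun x _ => by
        have h1 : HasDerivAt (fun y => (deriv u₀ y)^3)
            (3*(deriv u₀ x)^2 * deriv (deriv u₀) x) x := by
          have := ((hud' x).hasDerivAt).fun_pow 3
          simpa using this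
        have h2 := ((hud x).hasDerivAt).fun_mul h1
        exact h2.congr_deriv (by ring))
      (Continuous.intervalIntegrable (by fun_prop) 0 P)
    rw [h]; simp [hu₀0, hu₀P]
  have cψ : Continuous ψ := by rw [hψ]; fun_prop
  have cdψ : Continuous (deriv ψ) := by
    have : deriv ψ = fun x => (deriv u₀ x)^2 + u₀ x * deriv (deriv u₀) x :=
      funext hderivψ
    rw [this]; fun_prop
  have hF : IntervalIntegrable (fun x => (deriv ψ x)^2 - q x * (ψ x)^2)
      MeasureTheory.volume 0 P :=
    Continuous.intervalIntegrable (by fun_prop) 0 P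
  have hG : IntervalIntegrable (fun x => (q x + lam₀) * (q x + (4/3)*lam₀) * (u₀ x)^4)
      MeasureTheory.volume 0 P :=
    Continuous.intervalIntegrable (by fun_prop) 0 P
  have hAint : IntervalIntegrable
      (fun x => 3*(u₀ x)^2*(deriv u₀ x)^2 + (u₀ x)^3 * deriv (deriv u₀) x)
      MeasureTheory.volume 0 P :=
    Continuous.intervalIntegrable (by fun_prop) 0 P
  have hBint : IntervalIntegrable
      (fun x => (deriv u₀ x)^4 + 3*(u₀ x)*(deriv u₀ x)^2 * deriv (deriv u₀) x)
      MeasureTheory.volume 0 P :=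
    Continuous.intervalIntegrable (by fun_prop) 0 P
  have key : Set.EqOn
      (fun x => ((deriv ψ x)^2 - q x * (ψ x)^2)
        - (q x + lam₀) * (q x + (4/3)*lam₀) * (u₀ x)^4)
      (fun x => ((deriv u₀ x)^4 + 3*(u₀ x)*(deriv u₀ x)^2 * deriv (deriv u₀) x)
        + (lam₀/3) * (3*(u₀ x)^2*(deriv u₀ x)^2 + (u₀ x)^3 * deriv (deriv u₀) x))
      (Set.uIcc 0 P) := by
    intro x hx
    rw [Set.uIcc_of_le hP.le] at hx
    have e : deriv (deriv u₀) x = -((q x + lam₀) * u₀ x) := by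
      have := hode x hx; linarith
    simp only
    rw [hderivψ x, hψ, e]
    ring
  have hdiff : (∫ x in (0:ℝ)..P, ((deriv ψ x)^2 - q x * (ψ x)^2))
      - ∫ x in (0:ℝ)..P, (q x + lam₀) * (q x + (4/3)*lam₀) * (u₀ x)^4 = 0 := by
    rw [← integral_sub hF hG, integral_congr key,
      integral_add hBint (hAint.const_mul _), integral_const_mul, hA, hB]
    ring
  linarith
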